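/- arXiv:2006.08972 — 4 statements merged into one kernel-verified Lean document; each statement's English description precedes it below -/
import Mathlib

section
/- Let V ⊆ V' be an immediate extension of valuation rings with fraction fields K ⊆ K', and suppose x ∈ V' is transcendental over K and is a pseudo-limit of a transcendental pseudo-convergent sequence v in V without pseudo-limit in V. If V' is a filtered union of localizations of polynomial V-subalgebras in one variable, then for every polynomial f ∈ V[X] with f(x) ≠ 0 there exists y ∈ V with v(f(y)) = v(f(x)). -/
open Polynomial

variable {K' : Type*} [Field K'] {Γ₀ : Type*} [LinearOrderedCommGroupWithZero Γ₀]

/-- `C` is (inside the valuation ring of `v`) a localization `V[u']_{P(u')}` of a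
polynomial `V`-subalgebra in one variable: `u'` is an integer transcendental over `V`,
`P` has coefficients in `V`, `P(u')` is a unit of the valuation ring, and `C` consists of
the elements `g(u')/P(u')^n` with `g` over `V`. -/
def IsLocPolynomialSub (v : Valuation K' Γ₀) (V C : Subring K') : Prop :=
  ∃ u' : K', v u' ≤ 1 ∧
    (∀ q : Polynomial K', (∀ n, q.coeff n ∈ V) → q ≠ 0 → q.eval u' ≠ 0) ∧
    ∃ P : Polynomial K', (∀ n, P.coeff n ∈ V) ∧ v (P.eval u') = 1 ∧
      ∀ z : K', z ∈ C ↔ ∃ (g : Polynomial K') (n : ℕ),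
        (∀ m, g.coeff m ∈ V) ∧ z * (P.eval u') ^ n = g.eval u'

local instance : OrderBot Γ₀ where
  bot := 0
  bot_le _ := zero_le'

/-- value of a sum whose terms have pairwise distinct values is the sup of the values -/
theorem stmt5_sumval (v : Valuation K' Γ₀) (s : Finset ℕ) (g : ℕ → K') (t : ℕ → Γ₀)
    (h1 : ∀ k ∈ s, v (g k) = t k)
    (h2 : ∀ k ∈ s, ∀ l ∈ s, k ≠ l → t k ≠ t l) :
    v (∑ k ∈ s, g k) = s.sup t := by
  classical
  induction s using Finset.induction_on with
  | empty =>
    show v 0 = ⊥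
    rw [map_zero]; rfl
  | insert b s' hns ih =>
    have hgb : v (g b) = t b := h1 b (Finset.mem_insert_self b s')
    have ih' := ih (fun k hk => h1 k (Finset.mem_insert_of_mem hk))
      (fun k hk l hl => h2 k (Finset.mem_insert_of_mem hk) l (Finset.mem_insert_of_mem hl))
    rw [Finset.sum_insert hns, Finset.sup_insert]
    rcases s'.eq_empty_or_nonempty with hs | hs
    · subst hs; simp [hgb]
    · obtain ⟨k₀, hk₀, hsup⟩ := Finset.exists_mem_eq_sup s' hs t
      have hne : v (g b) ≠ v (∑ k ∈ s', g k) := by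
        rw [ih', hsup, hgb]
        exact h2 b (Finset.mem_insert_self b s') k₀ (Finset.mem_insert_of_mem hk₀)
          (fun h => hns (h ▸ hk₀))
      rw [Valuation.map_add_of_distinct_val v hne, ih', hgb]

/-- Let `V ⊆ V'` be an immediate extension of valuation rings with fraction
fields `K ⊆ K'`, and suppose `x ∈ V'` is transcendental over `K` and is a pseudo-limit of
a transcendental pseudo-convergent sequence in `V` without pseudo-limit in `V`.  If `V'`
is a filtered union of localizations of polynomial `V`-subalgebras in one variable, then
for every polynomial `f ∈ V[X]` with `f(x) ≠ 0` there exists `y ∈ V` with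
`val(f(y)) = val(f(x))`.  (`V'` is the valuation ring `v.integer` of the multiplicative
valuation `v`; classical `val a > val b` corresponds to `v a < v b`.) -/
theorem stmt_5 (v : Valuation K' Γ₀) (V : Subring K') (hV : V ≤ v.integer)
    -- immediate extension: same value group and same residue field
    (hvalgrp : ∀ z : K', z ≠ 0 → ∃ a : K', a ∈ V ∧ a ≠ 0 ∧ v a = v z)
    (hres : ∀ z ∈ v.integer, ∃ a ∈ V, v (z - a) < 1)
    (x : K') (hx : x ∈ v.integer)
    -- x is transcendental over K = Frac V
    (hxtr : ∀ q : Polynomial K', (∀ n, q.coeff n ∈ V) → q ≠ 0 → q.eval x ≠ 0)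
    (ι : Type*) [LinearOrder ι] (a : ι → K') (ha : ∀ j, a j ∈ V)
    -- pseudo-convergent
    (hpc : ∀ i j k : ι, i < j → j < k → v (a j - a k) < v (a i - a k))
    -- transcendental pseudo-convergent sequence
    (htr : ∀ f : Polynomial K', (∀ n, f.coeff n ∈ V) →
      ∃ N : ι, ∀ i j : ι, N ≤ i → i < j → v (f.eval (a i)) = v (f.eval (a j)))
    -- x is a pseudo-limit of the sequence
    (hlim : ∀ i j : ι, i < j → v (x - a i) = v (a i - a j))
    -- the sequence has no pseudo-limit in V
    (hnolim : ¬ ∃ y ∈ V, ∀ i j : ι, i < j → v (y - a i) = v (a i - a j))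
    -- V' is a filtered union of localizations of polynomial V-subalgebras in one variable
    (hunion : ∀ s : Finset K', (↑s : Set K') ⊆ (v.integer : Set K') →
      ∃ C : Subring K', (↑s : Set K') ⊆ (C : Set K') ∧ C ≤ v.integer ∧
        IsLocPolynomialSub v V C) :
    ∀ f : Polynomial K', (∀ n, f.coeff n ∈ V) → f.eval x ≠ 0 →
      ∃ y ∈ V, v (f.eval y) = v (f.eval x) := by
  classical
  intro f hf hfx
  have hf0 : f ≠ 0 := fun h => hfx (by simp [h])
  -- x ≠ a i
  have hxa : ∀ i, x - a i ≠ 0 := by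
    intro i
    have h1 : (X - C (a i)).eval x ≠ 0 := by
      apply hxtr
      · intro n
        rw [coeff_sub, coeff_X, coeff_C]
        refine V.sub_mem ?_ ?_ <;> split <;>
          first | exact V.one_mem | exact V.zero_mem | exact ha i
      · exact X_sub_C_ne_zero _
    simpa using h1
  have hγ0 : ∀ i, v (x - a i) ≠ 0 := fun i => by
    simpa [Valuation.ne_zero_iff] using hxa i
  -- no maximal index
  have hnomax : ∀ j : ι, ∃ k, j < k := by
    intro j
    by_contra hmax
    push_neg at hmax
    refine hnolim ⟨a j, ha j, ?_⟩
    intro i i' hii'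
    rcases lt_or_eq_of_le (hmax i') with h | h
    · have h1 : v (a i' - a j) < v (a i - a j) := hpc i i' j hii' h
      have h2 : a i - a i' = (a i - a j) - (a i' - a j) := by ring
      rw [h2, Valuation.map_sub_swap v (a j) (a i)]
      exact (v.map_sub_eq_of_lt_left h1).symm
    · rw [h, Valuation.map_sub_swap]
  -- strict monotonicity of γ
  have hγmono : ∀ i j : ι, i < j → v (x - a j) < v (x - a i) := by
    intro i j hij
    obtain ⟨k, hk⟩ := hnomax j
    rw [hlim j k hk, hlim i k (hij.trans hk)]
    exact hpc i j k hij hk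
  -- chains
  have hchain : ∀ N : ι, ∃ e : ℕ → ι, e 0 = N ∧ StrictMono e := by
    intro N
    choose nxt hnxt using hnomax
    exact ⟨fun m => Nat.rec N (fun _ p => nxt p) m, rfl,
      strictMono_nat_of_lt_succ fun m => hnxt _⟩
  have hane : ∀ i j : ι, i < j → a i ≠ a j := by
    intro i j hij h
    exact hγ0 i (by rw [hlim i j hij, h, sub_self, map_zero])
  -- above any index there is a non-root of any nonzero polynomial
  have hroot : ∀ g : Polynomial K', g ≠ 0 → ∀ N : ι, ∃ i, N ≤ i ∧ g.eval (a i) ≠ 0 := by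
    intro g hg N
    obtain ⟨e, he0, hem⟩ := hchain N
    by_contra hc
    push_neg at hc
    have heN : ∀ m : ℕ, N ≤ e m := fun m => he0 ▸ hem.monotone (Nat.zero_le m)
    have hroots : ∀ m : ℕ, a (e m) ∈ g.roots.toFinset := by
      intro m
      rw [Multiset.mem_toFinset, mem_roots hg]
      exact hc _ (heN m)
    have hinj : Function.Injective fun m : ℕ => a (e m) := by
      intro m m' h
      by_contra hne
      rcases Ne.lt_or_gt hne with h' | h'
      · exact hane _ _ (hem h') h
      · exact hane _ _ (hem h') h.symm
    have hcard := Finset.card_le_card_of_injOn (fun m => a (e m))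
      (fun m _ => hroots m) (hinj.injOn)
      (s := Finset.range (g.roots.toFinset.card + 1)) (t := g.roots.toFinset)
    simp [Finset.card_range] at hcard
  -- eventual constancy of values
  have hconst : ∀ g : Polynomial K', (∀ m, g.coeff m ∈ V) → g ≠ 0 →
      ∃ (N : ι) (c : Γ₀), c ≠ 0 ∧ ∀ i, N ≤ i → v (g.eval (a i)) = c := by
    intro g hgV hg
    obtain ⟨N, hN⟩ := htr g hgV
    obtain ⟨i₀, hi₀N, hi₀⟩ := hroot g hg N
    refine ⟨N, v (g.eval (a i₀)), by simpa [Valuation.ne_zero_iff] using hi₀, ?_⟩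
    intro i hi
    rcases lt_trichotomy i i₀ with h | h | h
    · exact hN i i₀ hi h
    · rw [h]
    · exact (hN i₀ i hi₀N h).symm
  -- Hasse derivative coefficients lie in V
  have hhV : ∀ k m : ℕ, (hasseDeriv k f).coeff m ∈ V := by
    intro k m
    rw [hasseDeriv_coeff]
    exact V.mul_mem (natCast_mem V _) (hf _)
  set n := f.natDegree with hn
  set S : Finset ℕ := (Finset.range (n + 1)).filter (fun k => hasseDeriv k f ≠ 0)
    with hS
  have h0f : hasseDeriv 0 f = f := by simp [hasseDeriv_zero]
  have h0S : 0 ∈ S := by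
    rw [hS, Finset.mem_filter]
    exact ⟨Finset.mem_range.2 (Nat.succ_pos n), by rw [h0f]; exact hf0⟩
  -- choose eventual values for each Hasse derivative
  have hNc : ∀ k : ℕ, ∃ (N : ι) (c : Γ₀), hasseDeriv k f ≠ 0 →
      (c ≠ 0 ∧ ∀ i, N ≤ i → v ((hasseDeriv k f).eval (a i)) = c) := by
    intro k
    by_cases hk : hasseDeriv k f ≠ 0
    · obtain ⟨N, c, hc⟩ := hconst _ (hhV k) hk
      exact ⟨N, c, fun _ => hc⟩
    · obtain ⟨N, c, hc⟩ := hconst f hf hf0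
      exact ⟨N, 1, fun h => absurd h hk⟩
  choose Nk ck hck using hNc
  obtain ⟨Nstar, hNstar⟩ : ∃ Nstar : ι, ∀ k ∈ Finset.range (n + 1), Nk k ≤ Nstar := by
    refine ⟨((Finset.range (n + 1)).image Nk).max' ?_, fun k hk => ?_⟩
    · exact (Finset.image_nonempty).2 ⟨0, Finset.mem_range.2 (Nat.succ_pos n)⟩
    · exact Finset.le_max' _ _ (Finset.mem_image_of_mem Nk hk)
  have hSck : ∀ k ∈ S, ck k ≠ 0 ∧ ∀ i, Nk k ≤ i → v ((hasseDeriv k f).eval (a i)) = ck k := by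
    intro k hk
    exact hck k ((Finset.mem_filter.1 hk).2)
  -- the value functions
  set t : ι → ℕ → Γ₀ := fun i k => ck k * (v (x - a i)) ^ k with ht
  -- a pair (k,l) can witness coincidence of values for at most one index
  have hkey : ∀ k ∈ S, ∀ l ∈ S, k < l → ∀ i i' : ι, i < i' →
      t i k = t i l → t i' k = t i' l → False := by
    intro k hk l hl hkl i i' hii' h1 h2
    have hγi := hγ0 i
    have hγi' := hγ0 i'
    have hlt : v (x - a i') < v (x - a i) := hγmono i i' hii'
    have hckl : ck l ≠ 0 := (hSck l hl).1
    have key : ∀ j : ι, t j k = t j l → ck k = ck l * (v (x - a j)) ^ (l - k) := by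
      intro j hj
      have hγj : (v (x - a j)) ^ k ≠ 0 := pow_ne_zero _ (hγ0 j)
      apply mul_right_cancel₀ hγj
      rw [ht] at hj
      calc ck k * v (x - a j) ^ k = ck l * v (x - a j) ^ l := hj
        _ = ck l * (v (x - a j) ^ (l - k) * v (x - a j) ^ k) := by
            rw [← pow_add, Nat.sub_add_cancel hkl.le]
        _ = ck l * v (x - a j) ^ (l - k) * v (x - a j) ^ k := by rw [mul_assoc]
    have heq : (v (x - a i)) ^ (l - k) = (v (x - a i')) ^ (l - k) := by
      have := (key i h1).symm.trans (key i' h2)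
      exact mul_left_cancel₀ hckl this
    have : (v (x - a i')) ^ (l - k) < (v (x - a i)) ^ (l - k) :=
      pow_lt_pow_left₀ hlt zero_le' (by omega)
    exact absurd heq (ne_of_gt this)
  -- existence of a good index
  set Pairs : Finset (ℕ × ℕ) := (S ×ˢ S).filter (fun p => p.1 < p.2) with hPairs
  have hgood : ∃ i, Nstar ≤ i ∧ ∀ k ∈ S, ∀ l ∈ S, k ≠ l → t i k ≠ t i l := by
    obtain ⟨e, he0, hem⟩ := hchain Nstar
    by_contra hc
    push_neg at hc
    have heN : ∀ m : ℕ, Nstar ≤ e m := fun m => he0 ▸ hem.monotone (Nat.zero_le m)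
    have hw : ∀ m : ℕ, ∃ p : ℕ × ℕ, p ∈ Pairs ∧ t (e m) p.1 = t (e m) p.2 := by
      intro m
      obtain ⟨k, hk, l, hl, hne, heq⟩ := hc (e m) (heN m)
      rcases hne.lt_or_gt with h | h
      · exact ⟨(k, l), Finset.mem_filter.2 ⟨Finset.mem_product.2 ⟨hk, hl⟩, h⟩, heq⟩
      · exact ⟨(l, k), Finset.mem_filter.2 ⟨Finset.mem_product.2 ⟨hl, hk⟩, h⟩, heq.symm⟩
    choose w hw1 hw2 using hw
    have hwinj : Function.Injective w := by
      intro m m' h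
      by_contra hne
      have hP := Finset.mem_filter.1 (hw1 m)
      have hP1 : (w m).1 ∈ S := (Finset.mem_product.1 hP.1).1
      have hP2 : (w m).2 ∈ S := (Finset.mem_product.1 hP.1).2
      rcases Ne.lt_or_gt hne with h' | h'
      · exact hkey _ hP1 _ hP2 hP.2 (e m) (e m') (hem h') (hw2 m) (h ▸ hw2 m')
      · exact hkey _ hP1 _ hP2 hP.2 (e m') (e m) (hem h') (h ▸ hw2 m') (hw2 m)
    have hcard := Finset.card_le_card_of_injOn w (fun m _ => hw1 m) (hwinj.injOn)
      (s := Finset.range (Pairs.card + 1)) (t := Pairs)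
    simp [Finset.card_range] at hcard
  obtain ⟨i, hiN, hgood⟩ := hgood
  obtain ⟨j, hij⟩ := hnomax i
  have hjN : Nstar ≤ j := hiN.trans hij.le
  -- values at i and j
  have hvk : ∀ k ∈ S, v ((hasseDeriv k f).eval (a i)) = ck k := by
    intro k hk
    exact (hSck k hk).2 i ((hNstar k (Finset.mem_filter.1 hk).1).trans hiN)
  have hvfi : v (f.eval (a i)) = ck 0 := by
    have := hvk 0 h0S; rwa [h0f] at this
  have hvfj : v (f.eval (a j)) = ck 0 := by
    have := (hSck 0 h0S).2 j ((hNstar 0 (Finset.mem_filter.1 h0S).1).trans hjN)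
    rwa [h0f] at this
  have hc₀ : ck 0 ≠ 0 := (hSck 0 h0S).1
  -- Taylor expansions
  have hTx : ∀ z : K', f.eval z =
      ∑ k ∈ Finset.range (n + 1), (hasseDeriv k f).eval (a i) * (z - a i) ^ k := by
    intro z
    conv_lhs => rw [← taylor_eval_sub (a i) f z]
    have hdeg : ((taylor (a i)) f).natDegree < n + 1 := by
      rw [natDegree_taylor, hn]; exact Nat.lt_succ_self _
    rw [eval_eq_sum_range' hdeg]
    exact Finset.sum_congr rfl fun k _ => by rw [taylor_coeff]
  -- difference as a sum over S.erase 0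
  have hdiff : ∀ z : K', f.eval z - f.eval (a i) =
      ∑ k ∈ S.erase 0, (hasseDeriv k f).eval (a i) * (z - a i) ^ k := by
    intro z
    have h1 : f.eval z = f.eval (a i) +
        ∑ k ∈ (Finset.range (n + 1)).erase 0, (hasseDeriv k f).eval (a i) * (z - a i) ^ k := by
      rw [hTx z, ← Finset.add_sum_erase _ _ (Finset.mem_range.2 (Nat.succ_pos n))]
      rw [h0f, pow_zero, mul_one]
    rw [h1, add_sub_cancel_left]
    refine (Finset.sum_subset ?_ ?_).symm
    · intro k hk
      have h2 := Finset.mem_erase.1 hk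
      exact Finset.mem_erase.2 ⟨h2.1, (Finset.mem_filter.1 h2.2).1⟩
    · intro k hk hk2
      have h2 := Finset.mem_erase.1 hk
      have h3 : hasseDeriv k f = 0 := by
        by_contra h4
        exact hk2 (Finset.mem_erase.2 ⟨h2.1, Finset.mem_filter.2 ⟨h2.2, h4⟩⟩)
      rw [h3, eval_zero, zero_mul]
  -- pairwise distinct values on S.erase 0
  have hdis : ∀ k ∈ S.erase 0, ∀ l ∈ S.erase 0, k ≠ l → t i k ≠ t i l :=
    fun k hk l hl hne => hgood k (Finset.mem_of_mem_erase hk) l (Finset.mem_of_mem_erase hl) hne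
  -- value of each term
  have hterm : ∀ z : K', v (z - a i) = v (x - a i) → ∀ k ∈ S.erase 0,
      v ((hasseDeriv k f).eval (a i) * (z - a i) ^ k) = t i k := by
    intro z hz k hk
    rw [Valuation.map_mul, Valuation.map_pow, hz, hvk k (Finset.mem_of_mem_erase hk), ht]
  have hzj : v (a j - a i) = v (x - a i) := by
    rw [Valuation.map_sub_swap, ← hlim i j hij]
  have hsumx : v (f.eval x - f.eval (a i)) = (S.erase 0).sup (t i) := by
    rw [hdiff x]
    exact stmt5_sumval v _ _ _ (hterm x rfl) hdis
  have hsumj : v (f.eval (a j) - f.eval (a i)) = (S.erase 0).sup (t i) := by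
    rw [hdiff (a j)]
    exact stmt5_sumval v _ _ _ (hterm (a j) hzj) hdis
  -- the sup is < ck 0
  have hle : (S.erase 0).sup (t i) ≤ ck 0 := by
    rw [← hsumj]
    calc v (f.eval (a j) - f.eval (a i)) ≤ v (f.eval (a j)) ⊔ v (f.eval (a i)) :=
        v.map_sub _ _
      _ = ck 0 := by rw [hvfi, hvfj, sup_idem]
  have hne : (S.erase 0).sup (t i) ≠ ck 0 := by
    rcases (S.erase 0).eq_empty_or_nonempty with h | h
    · rw [h, Finset.sup_empty]
      exact fun h' => hc₀ ((show (⊥ : Γ₀) = 0 from rfl) ▸ h'.symm)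
    · obtain ⟨k₀, hk₀, hsup⟩ := Finset.exists_mem_eq_sup _ h (t i)
      rw [hsup]
      have h1 : t i k₀ ≠ t i 0 :=
        hgood k₀ (Finset.mem_of_mem_erase hk₀) 0 h0S (Finset.mem_erase.1 hk₀).1
      simpa [ht, pow_zero, mul_one] using h1
  have hlt : v (f.eval x - f.eval (a i)) < ck 0 := by
    rw [hsumx]; exact lt_of_le_of_ne hle hne
  refine ⟨a i, ha i, ?_⟩
  rw [hvfi]
  have h1 : f.eval x = f.eval (a i) + (f.eval x - f.eval (a i)) := by ring
  rw [h1, v.map_add_eq_of_lt_left (by rw [hvfi]; exact hlt)]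
  exact hvfi.symm
end

section
/- Let C = V[u']_{P(u')} ⊆ V' be a localization of a polynomial V-subalgebra of a valuation ring extension V ⊆ V' with common maximal-ideal structure, where u' ∈ V' is transcendental over V and P(u') is a unit in V'. If u ∈ V satisfies u ≡ u' modulo the maximal ideal of V', then P(u) is a unit in V and the V-algebra map C → V sending u' to u is a retraction of the inclusion V ⊆ C. -/
open Polynomial

/-- Let `C = V[u']_{P(u')} ⊆ V'` be a localization of a polynomial
`V`-subalgebra of a valuation-ring extension `V ⊆ V'` (the maximal ideal of `V'`, i.e.
`{z | v z < 1}`, contracts to the maximal ideal of `V`), where `u' ∈ V'` is transcendental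
over `V` and `P(u')` is a unit in `V'`.  If `u ∈ V` satisfies `u ≡ u'` modulo the maximal
ideal of `V'`, then `P(u)` is a unit in `V` and the `V`-algebra map `C → V` sending `u'`
to `u` is a retraction of the inclusion `V ⊆ C`. -/
theorem stmt_6 (K' : Type*) [Field K'] (Γ₀ : Type*) [LinearOrderedCommGroupWithZero Γ₀]
    (v : Valuation K' Γ₀) (V : Subring K') (hV : V ≤ v.integer)
    -- the extension is local: elements of V of value 1 are invertible in V
    (hloc : ∀ z ∈ V, v z = 1 → z⁻¹ ∈ V)
    (u' : K') (hu' : v u' ≤ 1)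
    -- u' is transcendental over V
    (hutr : ∀ q : Polynomial K', (∀ n, q.coeff n ∈ V) → q ≠ 0 → q.eval u' ≠ 0)
    (P : Polynomial K') (hP : ∀ n, P.coeff n ∈ V)
    -- P(u') is a unit of V'
    (hPu' : v (P.eval u') = 1)
    (u : K') (hu : u ∈ V)
    -- u ≡ u' modulo the maximal ideal of V'
    (huu' : v (u - u') < 1)
    -- C = V[u']_{P(u')}
    (C : Subring K')
    (hC : ∀ z : K', z ∈ C ↔ ∃ (g : Polynomial K') (n : ℕ),
      (∀ m, g.coeff m ∈ V) ∧ z * (P.eval u') ^ n = g.eval u') :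
    (P.eval u ∈ V ∧ ∃ w ∈ V, P.eval u * w = 1) ∧
      ∃ ρ : C →+* K',
        (∀ z : C, ρ z ∈ V) ∧
        (∀ z : C, (z : K') ∈ V → ρ z = z) ∧
        (∀ z : C, (z : K') = u' → ρ z = u) := by
  classical
  -- coefficient membership lemmas
  have hcmul : ∀ a b : Polynomial K', (∀ k, a.coeff k ∈ V) → (∀ k, b.coeff k ∈ V) →
      ∀ k, (a * b).coeff k ∈ V := by
    intro a b ha hb k
    rw [coeff_mul]
    exact sum_mem (fun i _ => mul_mem (ha _) (hb _))
  have hcpow : ∀ (a : Polynomial K'), (∀ k, a.coeff k ∈ V) → ∀ (m : ℕ) (k : ℕ),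
      (a ^ m).coeff k ∈ V := by
    intro a ha m
    induction m with
    | zero =>
        intro k
        rw [pow_zero, coeff_one]
        split_ifs
        · exact one_mem V
        · exact zero_mem V
    | succ m ih =>
        intro k
        rw [pow_succ]
        exact hcmul _ _ ih ha k
  have hcadd : ∀ a b : Polynomial K', (∀ k, a.coeff k ∈ V) → (∀ k, b.coeff k ∈ V) →
      ∀ k, (a + b).coeff k ∈ V := by
    intro a b ha hb k; rw [coeff_add]; exact add_mem (ha k) (hb k)
  -- evaluation at elements of V stays in V
  have heval : ∀ (g : Polynomial K'), (∀ k, g.coeff k ∈ V) → ∀ x, x ∈ V → g.eval x ∈ V := by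
    intro g hg x hx
    rw [eval_eq_sum_range]
    exact sum_mem (fun i _ => mul_mem (hg i) (pow_mem hx i))
  -- v(P(u)) = 1
  have hvu : v u ≤ 1 := hV hu
  have hpowdiff : ∀ i : ℕ, v (u ^ i - u' ^ i) ≤ v (u - u') := by
    intro i
    induction i with
    | zero => simp
    | succ i ih =>
        have : u ^ (i + 1) - u' ^ (i + 1) = u * (u ^ i - u' ^ i) + (u - u') * u' ^ i := by ring
        rw [this]
        refine le_trans (v.map_add _ _) (max_le ?_ ?_)
        · rw [v.map_mul]
          calc v u * v (u ^ i - u' ^ i) ≤ 1 * v (u - u') :=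
                mul_le_mul' hvu ih
            _ = v (u - u') := one_mul _
        · rw [v.map_mul, v.map_pow]
          calc v (u - u') * v u' ^ i ≤ v (u - u') * 1 := by
                exact mul_le_mul' le_rfl (pow_le_one' hu' i)
            _ = v (u - u') := mul_one _
  have hdiff : v (P.eval u - P.eval u') < 1 := by
    have : P.eval u - P.eval u' =
        ∑ i ∈ Finset.range (P.natDegree + 1), P.coeff i * (u ^ i - u' ^ i) := by
      rw [eval_eq_sum_range, eval_eq_sum_range, ← Finset.sum_sub_distrib]
      congr 1; ext i; ring
    rw [this]
    refine lt_of_le_of_lt (v.map_sum_le (g := v (u - u')) ?_) huu'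
    intro i _
    rw [v.map_mul]
    calc v (P.coeff i) * v (u ^ i - u' ^ i) ≤ 1 * v (u - u') :=
          mul_le_mul' (hV (hP i)) (hpowdiff i)
      _ = v (u - u') := one_mul _
  have hPu : v (P.eval u) = 1 := by
    have : P.eval u = P.eval u' + (P.eval u - P.eval u') := by ring
    rw [this, v.map_add_eq_of_lt_left]
    · exact hPu'
    · rw [hPu']; exact hdiff
  have hPuV : P.eval u ∈ V := heval P hP u hu
  have hQ0 : P.eval u ≠ 0 := by
    intro h; rw [h, v.map_zero] at hPu; exact zero_ne_one hPu
  have hwV : (P.eval u)⁻¹ ∈ V := hloc _ hPuV hPu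
  set Q := P.eval u with hQdef
  -- well-definedness key lemma
  have key : ∀ (z : K') (g h : Polynomial K') (n m : ℕ),
      (∀ k, g.coeff k ∈ V) → (∀ k, h.coeff k ∈ V) →
      z * (P.eval u') ^ n = g.eval u' → z * (P.eval u') ^ m = h.eval u' →
      g.eval u * Q ^ m = h.eval u * Q ^ n := by
    intro z g h n m hg hh hgz hhz
    have hq : ∀ k, (g * P ^ m - h * P ^ n).coeff k ∈ V := by
      intro k
      rw [coeff_sub]
      exact sub_mem (hcmul _ _ hg (hcpow P hP m) k) (hcmul _ _ hh (hcpow P hP n) k)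
    have hq0 : (g * P ^ m - h * P ^ n).eval u' = 0 := by
      simp only [eval_sub, eval_mul, eval_pow, ← hgz, ← hhz]
      ring
    have : g * P ^ m - h * P ^ n = 0 := by
      by_contra hne
      exact hutr _ hq hne hq0
    have := congrArg (Polynomial.eval u) this
    simp only [eval_sub, eval_mul, eval_pow, eval_zero, sub_eq_zero] at this
    exact this
  refine ⟨⟨hPuV, (P.eval u)⁻¹, hwV, mul_inv_cancel₀ hQ0⟩, ?_⟩
  -- choose representations
  have rep : ∀ z : C, ∃ gn : Polynomial K' × ℕ,
      (∀ k, gn.1.coeff k ∈ V) ∧ (z : K') * (P.eval u') ^ gn.2 = gn.1.eval u' := by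
    intro z
    obtain ⟨g, n, h1, h2⟩ := (hC (z : K')).1 z.2
    exact ⟨⟨g, n⟩, h1, h2⟩
  let G : C → Polynomial K' := fun z => (rep z).choose.1
  let N : C → ℕ := fun z => (rep z).choose.2
  have hG : ∀ z : C, ∀ k, (G z).coeff k ∈ V := fun z => (rep z).choose_spec.1
  have hGN : ∀ z : C, (z : K') * (P.eval u') ^ (N z) = (G z).eval u' :=
    fun z => (rep z).choose_spec.2
  let f : C → K' := fun z => (G z).eval u / Q ^ (N z)
  have hQn0 : ∀ n : ℕ, Q ^ n ≠ 0 := fun n => pow_ne_zero n hQ0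
  have fval : ∀ (z : C) (g : Polynomial K') (n : ℕ), (∀ k, g.coeff k ∈ V) →
      (z : K') * (P.eval u') ^ n = g.eval u' → f z = g.eval u / Q ^ n := by
    intro z g n hg hz
    have := key (z : K') (G z) g (N z) n (hG z) hg (hGN z) hz
    show (G z).eval u / Q ^ (N z) = _
    rw [div_eq_div_iff (hQn0 _) (hQn0 _)]
    linear_combination this
  have fone : f 1 = 1 := by
    have := fval 1 1 0 (fun k => by
      rw [coeff_one]; split_ifs; exacts [one_mem V, zero_mem V]) (by simp)
    simpa using this
  have fzero : f 0 = 0 := by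
    have := fval 0 0 0 (fun k => by simpa using zero_mem V) (by simp)
    simpa using this
  have fadd : ∀ z₁ z₂ : C, f (z₁ + z₂) = f z₁ + f z₂ := by
    intro z₁ z₂
    have hrep : ((z₁ + z₂ : C) : K') * (P.eval u') ^ (N z₁ + N z₂) =
        (G z₁ * P ^ (N z₂) + G z₂ * P ^ (N z₁)).eval u' := by
      push_cast
      simp only [eval_add, eval_mul, eval_pow, ← hGN z₁, ← hGN z₂]
      ring
    have hco : ∀ k, (G z₁ * P ^ (N z₂) + G z₂ * P ^ (N z₁)).coeff k ∈ V :=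
      hcadd _ _ (hcmul _ _ (hG z₁) (hcpow P hP _)) (hcmul _ _ (hG z₂) (hcpow P hP _))
    rw [fval (z₁ + z₂) _ _ hco hrep]
    show _ = (G z₁).eval u / Q ^ (N z₁) + (G z₂).eval u / Q ^ (N z₂)
    simp only [eval_add, eval_mul, eval_pow, ← hQdef]
    rw [pow_add, div_add_div _ _ (hQn0 (N z₁)) (hQn0 (N z₂))]
    congr 1
    ring
  have fmul : ∀ z₁ z₂ : C, f (z₁ * z₂) = f z₁ * f z₂ := by
    intro z₁ z₂
    have hrep : ((z₁ * z₂ : C) : K') * (P.eval u') ^ (N z₁ + N z₂) =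
        (G z₁ * G z₂).eval u' := by
      push_cast
      simp only [eval_mul, ← hGN z₁, ← hGN z₂]
      ring
    have hco : ∀ k, (G z₁ * G z₂).coeff k ∈ V := hcmul _ _ (hG z₁) (hG z₂)
    rw [fval (z₁ * z₂) _ _ hco hrep]
    show _ = (G z₁).eval u / Q ^ (N z₁) * ((G z₂).eval u / Q ^ (N z₂))
    rw [div_mul_div_comm, eval_mul, pow_add]
  refine ⟨⟨⟨⟨f, fone⟩, fmul⟩, fzero, fadd⟩, ?_, ?_, ?_⟩
  · intro z
    show f z ∈ V
    have : f z = (G z).eval u * ((P.eval u)⁻¹) ^ (N z) := by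
      show (G z).eval u / Q ^ (N z) = _
      rw [div_eq_mul_inv, ← inv_pow, hQdef]
    rw [this]
    exact mul_mem (heval _ (hG z) u hu) (pow_mem hwV _)
  · intro z hz
    have := fval z (Polynomial.C (z : K')) 0 (fun k => by
      rw [coeff_C]; split_ifs; exacts [hz, zero_mem V]) (by simp)
    simpa using this
  · intro z hz
    have := fval z Polynomial.X 0 (fun k => by
      rw [coeff_X]; split_ifs; exacts [one_mem V, zero_mem V]) (by simp [hz])
    simpa using this
end

section
/- Let V ⊆ V' be a dense extension of valuation rings (same fraction-field valuation, V dense in V'). Then every pseudo-convergent sequence in V that has a pseudo-limit in V' and is not fundamental has a pseudo-limit in V. -/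
/-- Let `V ⊆ V'` be a dense extension of valuation rings.  Then every
pseudo-convergent sequence in `V` that has a pseudo-limit in `V'` and is not fundamental
has a pseudo-limit in `V`.  Here `V'` is the valuation ring of the valuation `v`, dense
means every element of `V'` is approximated by elements of `V` to within any value, and
a sequence is fundamental when the values `val(v_i − v_j)` (`i < j`) are cofinal in the
value group (multiplicatively: get below every nonzero `γ`). -/
theorem stmt_13 (K' : Type*) [Field K'] (Γ₀ : Type*) [LinearOrderedCommGroupWithZero Γ₀]
    (v : Valuation K' Γ₀) (V : Subring K') (hV : V ≤ v.integer)
    (hdense : ∀ x' ∈ v.integer, ∀ γ : Γ₀, γ ≠ 0 → ∃ a ∈ V, v (x' - a) < γ)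
    (ι : Type*) [LinearOrder ι] (a : ι → K') (ha : ∀ j, a j ∈ V)
    (hpc : ∀ i j k : ι, i < j → j < k → v (a j - a k) < v (a i - a k))
    (x : K') (hx : x ∈ v.integer)
    (hlim : ∀ i j : ι, i < j → v (x - a i) = v (a i - a j))
    (hnotfund : ¬ (∀ γ : Γ₀, γ ≠ 0 → ∃ i j : ι, i < j ∧ v (a i - a j) < γ)) :
    ∃ y ∈ V, ∀ i j : ι, i < j → v (y - a i) = v (a i - a j) := by
  push_neg at hnotfund
  obtain ⟨γ, hγ, hge⟩ := hnotfund
  obtain ⟨y, hyV, hy⟩ := hdense x hx γ hγ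
  refine ⟨y, hyV, fun i j hij => ?_⟩
  have h1 : v (x - a i) = v (a i - a j) := hlim i j hij
  have h2 : v (x - y) < v (x - a i) := h1 ▸ lt_of_lt_of_le hy (hge i j hij)
  have : y - a i = (x - a i) - (x - y) := by ring
  rw [this, Valuation.map_sub_eq_of_lt_left _ h2, h1]
end

section
/- Let V ⊆ V' be an immediate extension of valuation rings such that V' is a filtered union of subrings that are localizations of polynomial V-subalgebras in one variable, and let V be such that every such subring admits a V-algebra retraction to V. Then any finite system of polynomial equations over V with a solution in V' has a solution in V. -/
open Polynomial

variable {K' : Type*} [Field K'] {Γ₀ : Type*} [LinearOrderedCommGroupWithZero Γ₀]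

/-- Let `V ⊆ V'` be an immediate extension of valuation rings such that
`V'` is a filtered union of subrings that are localizations of polynomial `V`-subalgebras
in one variable, and suppose every such subring admits a `V`-algebra retraction to `V`.
Then any finite system of polynomial equations over `V` with a solution in `V'` has a
solution in `V`. -/
theorem stmt_19 (v : Valuation K' Γ₀) (V : Subring K') (hV : V ≤ v.integer)
    -- immediate extension: same value group and same residue field
    (hvalgrp : ∀ z : K', z ≠ 0 → ∃ a : K', a ∈ V ∧ a ≠ 0 ∧ v a = v z)
    (hres : ∀ z ∈ v.integer, ∃ a ∈ V, v (z - a) < 1)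
    -- V' is a filtered union of localizations of polynomial V-subalgebras in one variable
    (hunion : ∀ s : Finset K', (↑s : Set K') ⊆ (v.integer : Set K') →
      ∃ C : Subring K', (↑s : Set K') ⊆ (C : Set K') ∧ C ≤ v.integer ∧
        IsLocPolynomialSub v V C)
    -- every such subring admits a V-algebra retraction onto V
    (hret : ∀ C : Subring K', C ≤ v.integer → IsLocPolynomialSub v V C →
      ∃ ρ : C →+* K', (∀ z : C, ρ z ∈ V) ∧ (∀ z : C, (z : K') ∈ V → ρ z = z)) :
    ∀ (n m : ℕ) (F : Fin n → MvPolynomial (Fin m) K'),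
      (∀ i d, (F i).coeff d ∈ V) →
      (∃ sol : Fin m → K', (∀ j, sol j ∈ v.integer) ∧
        ∀ i, MvPolynomial.eval sol (F i) = 0) →
      ∃ ysol : Fin m → K', (∀ j, ysol j ∈ V) ∧ ∀ i, MvPolynomial.eval ysol (F i) = 0 := by

  classical
  intro n m F hF ⟨sol, hsolInt, hsol0⟩
  -- gather the solution into a finite set inside the valuation ring
  set s : Finset K' := Finset.univ.image sol with hs
  have hsub : (↑s : Set K') ⊆ (v.integer : Set K') := by
    intro x hx
    simp only [hs, Finset.coe_image, Set.mem_image] at hx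
    obtain ⟨j, -, rfl⟩ := hx
    exact hsolInt j
  obtain ⟨C, hsC, hCint, hloc⟩ := hunion s hsub
  -- V is contained in C
  have hVC : ∀ z ∈ V, z ∈ C := by
    obtain ⟨u', hu1, htrans, P, hPc, hP1, hmem⟩ := hloc
    intro z hz
    rw [hmem]
    refine ⟨Polynomial.C z, 0, ?_, by simp⟩
    intro m
    rw [Polynomial.coeff_C]
    split_ifs
    · exact hz
    · exact V.zero_mem
  obtain ⟨ρ, hρV, hρid⟩ := hret C hCint hloc
  have hsolC : ∀ j, sol j ∈ C := fun j =>
    hsC (Finset.mem_coe.mpr (Finset.mem_image_of_mem sol (Finset.mem_univ j)))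
  set solC : Fin m → C := fun j => ⟨sol j, hsolC j⟩ with hsolCdef
  refine ⟨fun j => ρ (solC j), fun j => hρV _, fun i => ?_⟩
  -- element of C representing eval sol (F i)
  set e : C := ∑ d ∈ (F i).support,
      (⟨(F i).coeff d, hVC _ (hF i d)⟩ : C) * ∏ j ∈ d.support, (solC j) ^ d j with he
  have hcoe : (e : K') = MvPolynomial.eval sol (F i) := by
    rw [MvPolynomial.eval_eq, he]
    push_cast
    rfl
  have he0 : e = 0 := by
    apply Subtype.ext
    rw [hcoe, hsol0 i]
    rfl
  have hρe : ρ e = 0 := by rw [he0, map_zero]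
  rw [he, map_sum] at hρe
  rw [MvPolynomial.eval_eq, ← hρe]
  refine Finset.sum_congr rfl fun d hd => ?_
  rw [map_mul, map_prod]
  congr 1
  · exact (hρid ⟨(F i).coeff d, hVC _ (hF i d)⟩ (hF i d)).symm
  · refine Finset.prod_congr rfl fun j _ => ?_
    rw [map_pow]
end
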